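/- Let f be holomorphic near z ∈ ℂ with f′(z) ≠ 0, and let M(ζ) = (aζ + b)/(cζ + d) be a Möbius transformation with ad − bc ≠ 0 such that M is finite and holomorphic at f(w) for w near z (i.e., c·f(w) + d ≠ 0 near z). Then for every n ≥ 0, Tamanoi's Schwarzian derivatives satisfy S_n[M∘f](z) = S_n[f](z). -/

import Mathlib

/-- The Möbius-normalized function `V(z,w) = N_z(f(z+w))` used by Tamanoi. -/
noncomputable def tamanoiV (f : ℂ → ℂ) (z w : ℂ) : ℂ :=
  deriv f z * (f (z + w) - f z) /
    ((1 / 2) * iteratedDeriv 2 f z * (f (z + w) - f z) + (deriv f z) ^ 2)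

/-- Tamanoi's Schwarzian derivative of virtual order `n`. -/
noncomputable def tamanoiS (f : ℂ → ℂ) (n : ℕ) (z : ℂ) : ℂ :=
  iteratedDeriv (n + 1) (tamanoiV f z) 0

/-- Derivative of a Möbius transformation composed with `f`. -/
lemma deriv_moebius_comp (f : ℂ → ℂ) (a b c d : ℂ) {y : ℂ}
    (hfy : DifferentiableAt ℂ f y) (hden : c * f y + d ≠ 0) :
    deriv (fun w => (a * f w + b) / (c * f w + d)) y
      = (a * d - b * c) * deriv f y / (c * f y + d) ^ 2 := by
  have hu : HasDerivAt (fun w => a * f w + b) (a * deriv f y) y :=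
    (hfy.hasDerivAt.const_mul a).add_const b
  have hv : HasDerivAt (fun w => c * f w + d) (c * deriv f y) y :=
    (hfy.hasDerivAt.const_mul c).add_const d
  rw [show (fun w => (a * f w + b) / (c * f w + d)) = (fun w => a * f w + b) / (fun w => c * f w + d) from rfl, (hu.div hv hden).deriv]
  field_simp
  ring

/-- The derivative of a function analytic at a point is analytic there. -/
lemma analyticAt_deriv' {f : ℂ → ℂ} {z : ℂ} (hf : AnalyticAt ℂ f z) :
    AnalyticAt ℂ (deriv f) z := by
  obtain ⟨t, hsub, _, hzt⟩ := _root_.mem_nhds_iff.mp hf.eventually_analyticAt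
  exact (AnalyticOnNhd.deriv fun y hy => hsub hy) z hzt

/-- The key field identity behind Möbius invariance of `tamanoiV`. -/
lemma tamanoi_aux (K D c p q Δ : ℂ) (hK : K ≠ 0) (hD : D ≠ 0)
    (hDw : D + c * Δ ≠ 0) (hX : 1 / 2 * q * Δ + p ^ 2 ≠ 0) :
    K * p / D ^ 2 * (K * Δ / ((D + c * Δ) * D)) /
      (1 / 2 * (K * (q * D - 2 * c * p ^ 2) / D ^ 3) * (K * Δ / ((D + c * Δ) * D))
        + (K * p / D ^ 2) ^ 2)
    = p * Δ / (1 / 2 * q * Δ + p ^ 2) := by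
  have h2 : (2 : ℂ) ≠ 0 := two_ne_zero
  have hE : (D + c * Δ) * D ≠ 0 := mul_ne_zero hDw hD
  have hden : 1 / 2 * (K * (q * D - 2 * c * p ^ 2) / D ^ 3) * (K * Δ / ((D + c * Δ) * D))
        + (K * p / D ^ 2) ^ 2
      = K ^ 2 * (1 / 2 * q * Δ + p ^ 2) / (D ^ 3 * (D + c * Δ)) := by
    rw [div_mul_div_comm, div_mul_div_comm, div_pow,
      div_add_div _ _ (mul_ne_zero (mul_ne_zero h2 (pow_ne_zero 3 hD)) hE)
        (pow_ne_zero 2 (pow_ne_zero 2 hD)),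
      div_eq_div_iff (mul_ne_zero (mul_ne_zero (mul_ne_zero h2 (pow_ne_zero 3 hD)) hE)
        (pow_ne_zero 2 (pow_ne_zero 2 hD))) (mul_ne_zero (pow_ne_zero 3 hD) hDw)]
    ring
  rw [hden, div_mul_div_comm, div_div_div_eq,
    div_eq_div_iff (mul_ne_zero (mul_ne_zero (pow_ne_zero 2 hD) hE)
      (mul_ne_zero (pow_ne_zero 2 hK) hX)) hX]
  ring

/-- Möbius invariance of Tamanoi's Schwarzian derivatives:
`S_n[M∘f](z) = S_n[f](z)` for `M(ζ) = (aζ+b)/(cζ+d)` with `ad - bc ≠ 0`. -/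
theorem tamanoiS_moebius_invariant (f : ℂ → ℂ) (z : ℂ)
    (hf : AnalyticAt ℂ f z) (hf' : deriv f z ≠ 0)
    (a b c d : ℂ) (habcd : a * d - b * c ≠ 0)
    (hM : ∀ᶠ w in nhds z, c * f w + d ≠ 0) (n : ℕ) :
    tamanoiS (fun w => (a * f w + b) / (c * f w + d)) n z = tamanoiS f n z := by
  set g : ℂ → ℂ := fun w => (a * f w + b) / (c * f w + d) with hgdef
  have hD : c * f z + d ≠ 0 := hM.self_of_nhds
  have hg1 : deriv g z = (a * d - b * c) * deriv f z / (c * f z + d) ^ 2 :=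
    deriv_moebius_comp f a b c d hf.differentiableAt hD
  have hEv : ∀ᶠ y in nhds z, AnalyticAt ℂ f y ∧ c * f y + d ≠ 0 :=
    hf.eventually_analyticAt.and hM
  have hgd : deriv g =ᶠ[nhds z]
      fun y => (a * d - b * c) * deriv f y / (c * f y + d) ^ 2 :=
    hEv.mono fun y hy => deriv_moebius_comp f a b c d hy.1.differentiableAt hy.2
  have hq' : iteratedDeriv 2 f z = deriv (deriv f) z := by
    simp [iteratedDeriv_succ, iteratedDeriv_one]
  have hdf2 : HasDerivAt (deriv f) (iteratedDeriv 2 f z) z := by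
    rw [hq']; exact (analyticAt_deriv' hf).differentiableAt.hasDerivAt
  have hg2 : iteratedDeriv 2 g z
      = (a * d - b * c) * (iteratedDeriv 2 f z * (c * f z + d) - 2 * c * (deriv f z) ^ 2)
        / (c * f z + d) ^ 3 := by
    have h2 : iteratedDeriv 2 g z = deriv (deriv g) z := by
      simp [iteratedDeriv_succ, iteratedDeriv_one]
    rw [h2, hgd.deriv_eq]
    have hu : HasDerivAt (fun y => (a * d - b * c) * deriv f y)
        ((a * d - b * c) * iteratedDeriv 2 f z) z := hdf2.const_mul _
    have hv0 : HasDerivAt (fun y => c * f y + d) (c * deriv f z) z :=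
      (hf.differentiableAt.hasDerivAt.const_mul c).add_const d
    have hv : HasDerivAt (fun y => (c * f y + d) ^ 2)
        ((2 : ℕ) * (c * f z + d) ^ 1 * (c * deriv f z)) z := hv0.pow 2
    rw [show (fun y => (a * d - b * c) * deriv f y / (c * f y + d) ^ 2) = (fun y => (a * d - b * c) * deriv f y) / (fun y => (c * f y + d) ^ 2) from rfl, (hu.div hv (pow_ne_zero 2 hD)).deriv]
    field_simp
    ring
  have htend : Filter.Tendsto (fun w : ℂ => z + w) (nhds 0) (nhds z) := by
    have : Continuous fun w : ℂ => z + w := continuous_const.add continuous_id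
    simpa using this.tendsto 0
  have hDw : ∀ᶠ w in nhds 0, c * f (z + w) + d ≠ 0 := htend.eventually hM
  have hfc : ContinuousAt (fun w : ℂ => f (z + w)) 0 := by
    have h1 : ContinuousAt f (z + 0) := by simpa using hf.continuousAt
    exact h1.comp ((continuous_const.add continuous_id).continuousAt)
  have hX : ∀ᶠ w in nhds 0,
      (1 / 2) * iteratedDeriv 2 f z * (f (z + w) - f z) + (deriv f z) ^ 2 ≠ 0 := by
    have hc : ContinuousAt
        (fun w : ℂ => (1 / 2) * iteratedDeriv 2 f z * (f (z + w) - f z) + (deriv f z) ^ 2) 0 :=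
      (continuousAt_const.mul (hfc.sub continuousAt_const)).add continuousAt_const
    have h0 : (1 / 2) * iteratedDeriv 2 f z * (f (z + 0) - f z) + (deriv f z) ^ 2 ≠ 0 := by
      simp [pow_ne_zero, hf']
    exact hc.eventually_ne h0
  have hVeq : tamanoiV g z =ᶠ[nhds 0] tamanoiV f z := by
    filter_upwards [hDw, hX] with w hDw hX
    simp only [tamanoiV, hg1, hg2]
    simp only [hgdef]
    have hdiff : (a * f (z + w) + b) / (c * f (z + w) + d) - (a * f z + b) / (c * f z + d)
        = (a * d - b * c) * (f (z + w) - f z)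
          / (((c * f z + d) + c * (f (z + w) - f z)) * (c * f z + d)) := by
      rw [div_sub_div _ _ hDw hD,
        div_eq_div_iff (mul_ne_zero hDw hD)
          (mul_ne_zero (by rwa [show (c * f z + d) + c * (f (z + w) - f z) = c * f (z + w) + d
            from by ring]) hD)]
      ring
    rw [hdiff,
      show c * f (z + w) + d = (c * f z + d) + c * (f (z + w) - f z) from by ring] at *
    exact tamanoi_aux (a * d - b * c) (c * f z + d) c (deriv f z) (iteratedDeriv 2 f z)
      (f (z + w) - f z) habcd hD hDw hX
  have key : ∀ m, iteratedDeriv m (tamanoiV g z) =ᶠ[nhds 0] iteratedDeriv m (tamanoiV f z) := by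
    intro m
    induction m with
    | zero => simpa using hVeq
    | succ k ih =>
        simp only [iteratedDeriv_succ]
        exact ih.deriv
  exact (key (n + 1)).self_of_nhds
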